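/- For integers r ≥ 3, k ≥ r+4, t = ⌊(k-1)/2⌋, and any integer s with k-t ≤ s ≤ k-2, we have (k-2) · max(k-s, C(k-s, r-1)) < C(k-1, r) - C(r, 2). -/

import Mathlib

private lemma two_choose_two (m : ℕ) : 2 * m.choose 2 = m * (m - 1) := by
  have h := Nat.choose_succ_right_eq m 1
  simp [Nat.choose_one_right] at h
  omega

private lemma six_choose_three (n : ℕ) : 6 * n.choose 3 = n * (n - 1) * (n - 2) := by
  have h3 := Nat.choose_succ_right_eq n 2
  have h2 := two_choose_two n
  -- h3 : n.choose 3 * 3 = n.choose 2 * (n - 2)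
  calc 6 * n.choose 3 = 2 * (n.choose 3 * 3) := by ring
    _ = 2 * (n.choose 2 * (n - 2)) := by rw [h3]
    _ = (2 * n.choose 2) * (n - 2) := by ring
    _ = n * (n - 1) * (n - 2) := by rw [h2]

private lemma choose_mono_half (n : ℕ) : ∀ j, j ≤ n / 2 → ∀ i, i ≤ j → n.choose i ≤ n.choose j := by
  intro j
  induction j with
  | zero => intro _ i hi; simp [Nat.le_zero.mp hi]
  | succ j ih =>
    intro hj i hi
    rcases Nat.lt_or_ge i (j + 1) with h | h
    · exact le_trans (ih (by omega) i (by omega))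
        (Nat.choose_le_succ_of_lt_half_left (by omega))
    · have : i = j + 1 := by omega
      simp [this]

private lemma choose_three_le (n r : ℕ) (hr : 3 ≤ r) (hn : r + 3 ≤ n) :
    n.choose 3 ≤ n.choose r := by
  rcases le_or_gt r (n / 2) with h | h
  · exact choose_mono_half n r h 3 hr
  · have h1 : r ≤ n := by omega
    rw [← Nat.choose_symm h1]
    exact choose_mono_half n (n - r) (by omega) 3 (by omega)

private lemma vand3 (a b r : ℕ) (hr : 4 ≤ r) :
    a * b.choose (r - 1) + b * a.choose (r - 1) + a.choose 2 * b.choose (r - 2) ≤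
      (a + b).choose r := by
  rw [Nat.add_choose_eq]
  have hsub : ({(1, r - 1), (r - 1, 1), (2, r - 2)} : Finset (ℕ × ℕ)) ⊆
      Finset.HasAntidiagonal.antidiagonal r := by
    intro x hx
    simp only [Finset.mem_insert, Finset.mem_singleton] at hx
    rcases hx with h | h | h <;> subst h <;> simp [Finset.HasAntidiagonal.mem_antidiagonal] <;> omega
  refine le_trans ?_ (Finset.sum_le_sum_of_subset hsub)
  rw [Finset.sum_insert (by simp; omega), Finset.sum_insert (by simp; omega),
    Finset.sum_singleton]
  simp only [Nat.choose_one_right]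
  ring_nf
  omega

private lemma vand3' (a b : ℕ) :
    a * b.choose 2 + b * a.choose 2 + b.choose 3 ≤ (a + b).choose 3 := by
  rw [Nat.add_choose_eq]
  have hsub : ({(1, 2), (2, 1), (0, 3)} : Finset (ℕ × ℕ)) ⊆ Finset.HasAntidiagonal.antidiagonal 3 := by
    intro x hx
    simp only [Finset.mem_insert, Finset.mem_singleton] at hx
    rcases hx with h | h | h <;> subst h <;> simp [Finset.HasAntidiagonal.mem_antidiagonal]
  refine le_trans ?_ (Finset.sum_le_sum_of_subset hsub)
  rw [Finset.sum_insert (by simp), Finset.sum_insert (by simp), Finset.sum_singleton]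
  simp only [Nat.choose_one_right, Nat.choose_zero_right, one_mul]
  ring_nf
  omega

private lemma crux (a r : ℕ) (hr : 3 ≤ r) (ha : r - 1 ≤ a) :
    r.choose 2 < a + (r - 1) * a.choose 2 := by
  have h1 : (r - 1).choose 2 ≤ a.choose 2 := Nat.choose_le_choose 2 ha
  have h2 := two_choose_two r
  have h3 := two_choose_two (r - 1)
  -- reduce to numeric
  have key : r.choose 2 < (r - 1) + (r - 1) * (r - 1).choose 2 := by
    have : 2 * r.choose 2 < 2 * ((r - 1) + (r - 1) * (r - 1).choose 2) := by
      obtain ⟨m, rfl⟩ : ∃ m, r = m + 3 := ⟨r - 3, by omega⟩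
      have h2' : 2 * (m + 3).choose 2 = (m + 3) * (m + 2) := two_choose_two (m + 3)
      have h3' : 2 * (m + 2).choose 2 = (m + 2) * (m + 1) := two_choose_two (m + 2)
      show 2 * (m + 3).choose 2 < 2 * ((m + 2) + (m + 2) * (m + 2).choose 2)
      nlinarith [h2', h3']
    omega
  calc r.choose 2 < (r - 1) + (r - 1) * (r - 1).choose 2 := key
    _ ≤ a + (r - 1) * a.choose 2 := by
        have := Nat.mul_le_mul_left (r - 1) h1
        omega

private lemma main_ineq (n r : ℕ) (hr : 3 ≤ r) (hn : r + 3 ≤ n) :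
    (n - 1) * max (n / 2) ((n / 2).choose (r - 1)) + r.choose 2 < n.choose r := by
  set a := n / 2 with ha
  have hab : a + (n - a) = n := by omega
  set b := n - a with hb
  have hba : a ≤ b := by omega
  have ha3 : 3 ≤ a := by omega
  rcases le_total (a.choose (r - 1)) a with h | h
  · -- case 1 : max = a
    rw [max_eq_left h]
    have h3 : n.choose 3 ≤ n.choose r := choose_three_le n r hr hn
    have hr2 : r.choose 2 ≤ (n - 3).choose 2 := Nat.choose_le_choose 2 (by omega)
    have key : (n - 1) * a + (n - 3).choose 2 < n.choose 3 := by
      have h6 : 6 * n.choose 3 = n * (n - 1) * (n - 2) := six_choose_three n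
      have h2 : 2 * (n - 3).choose 2 = (n - 3) * (n - 3 - 1) := two_choose_two (n - 3)
      have : 6 * ((n - 1) * a + (n - 3).choose 2) < 6 * n.choose 3 := by
        obtain ⟨m, rfl⟩ : ∃ m, n = m + 6 := ⟨n - 6, by omega⟩
        have h6' : 6 * (m + 6).choose 3 = (m + 6) * (m + 5) * (m + 4) := six_choose_three (m + 6)
        have h2' : 2 * (m + 3).choose 2 = (m + 3) * (m + 2) := two_choose_two (m + 3)
        have h2a : 2 * a ≤ m + 6 := by omega
        show 6 * ((m + 5) * a + (m + 3).choose 2) < 6 * (m + 6).choose 3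
        nlinarith [h6', h2', h2a]
      omega
    calc (n - 1) * a + r.choose 2 ≤ (n - 1) * a + (n - 3).choose 2 := by omega
      _ < n.choose 3 := key
      _ ≤ n.choose r := h3
  · -- case 2 : max = choose, and a ≤ a.choose (r-1)
    rw [max_eq_right h]
    have har : r - 1 ≤ a := by
      by_contra hc
      push_neg at hc
      rw [Nat.choose_eq_zero_of_lt hc] at h
      omega
    have hcrux : r.choose 2 < a + (r - 1) * a.choose 2 := crux a r hr har
    rcases Nat.lt_or_ge r 4 with hr4 | hr4
    · -- r = 3
      have hr3 : r = 3 := by omega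
      subst hr3
      simp only [show (3:ℕ) - 1 = 2 from rfl] at *
      have hv := vand3' a b
      rw [hab] at hv
      have h1 : a.choose 2 ≤ b.choose 2 := Nat.choose_le_choose 2 hba
      have h2 : 0 < b.choose 3 := Nat.choose_pos (by omega)
      have hn1 : (n - 1) * a.choose 2 + a.choose 2 = n * a.choose 2 := by
        have : n - 1 + 1 = n := by omega
        calc (n - 1) * a.choose 2 + a.choose 2 = (n - 1 + 1) * a.choose 2 := by ring
          _ = n * a.choose 2 := by rw [this]
      have hna : n * a.choose 2 = a * a.choose 2 + b * a.choose 2 := by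
        rw [← hab]; ring
      have haa : a * a.choose 2 ≤ a * b.choose 2 := Nat.mul_le_mul_left a h1
      -- crux with r = 3 : 3.choose 2 < a + 2 * a.choose 2 ... use directly a.choose 2 ≥ 3
      have h33 : (3:ℕ).choose 2 ≤ a.choose 2 := Nat.choose_le_choose 2 ha3
      have h3v : (3:ℕ).choose 2 = 3 := rfl
      omega
    · -- r ≥ 4
      have hv := vand3 a b r hr4
      rw [hab] at hv
      have h1 : a.choose (r - 1) ≤ b.choose (r - 1) := Nat.choose_le_choose _ hba
      have h2 : (r - 1) ≤ b.choose (r - 2) := by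
        have e : (r - 1).choose (r - 2) = r - 1 := by
          have h1' : 1 ≤ r - 1 := by omega
          have := Nat.choose_symm h1'
          rw [show r - 1 - 1 = r - 2 by omega] at this
          rw [this, Nat.choose_one_right]
        calc r - 1 = (r - 1).choose (r - 2) := e.symm
          _ ≤ b.choose (r - 2) := Nat.choose_le_choose _ (by omega)
      have haa : a * a.choose (r - 1) ≤ a * b.choose (r - 1) :=
        Nat.mul_le_mul_left a h1
      have hcc : (r - 1) * a.choose 2 ≤ b.choose (r - 2) * a.choose 2 :=
        Nat.mul_le_mul_right _ h2
      have hn1 : (n - 1) * a.choose (r - 1) + a.choose (r - 1) = n * a.choose (r - 1) := by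
        have hn' : n - 1 + 1 = n := by omega
        calc (n - 1) * a.choose (r - 1) + a.choose (r - 1)
            = (n - 1 + 1) * a.choose (r - 1) := by ring
          _ = n * a.choose (r - 1) := by rw [hn']
      have hna : n * a.choose (r - 1) = a * a.choose (r - 1) + b * a.choose (r - 1) := by
        rw [← hab]; ring
      have hcomm : a.choose 2 * b.choose (r - 2) = b.choose (r - 2) * a.choose 2 := by ring
      rw [hcomm] at hv
      omega

theorem stmt_2 (r k t s : ℕ) (hr : 3 ≤ r) (hk : r + 4 ≤ k)
    (ht : t = (k - 1) / 2) (hs1 : k - t ≤ s) (hs2 : s ≤ k - 2) :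
    ((k - 2) * max (k - s) ((k - s).choose (r - 1)) : ℤ) <
      (k - 1).choose r - r.choose 2 := by
  have e1 : ((k:ℤ) - 2) = ((k - 2 : ℕ) : ℤ) := by
    have : 2 ≤ k := by omega
    push_cast [this]; ring
  rw [e1, ← Nat.cast_mul]
  have hms : k - s ≤ (k - 1) / 2 := by omega
  have hmax : max (k - s) ((k - s).choose (r - 1)) ≤
      max ((k - 1) / 2) (((k - 1) / 2).choose (r - 1)) :=
    max_le_max hms (Nat.choose_le_choose _ hms)
  have hmain := main_ineq (k - 1) r hr (by omega)
  have hmul : (k - 2) * max (k - s) ((k - s).choose (r - 1)) ≤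
      ((k - 1) - 1) * max ((k - 1) / 2) (((k - 1) / 2).choose (r - 1)) := by
    have : k - 2 = (k - 1) - 1 := by omega
    rw [this]
    exact Nat.mul_le_mul_left _ hmax
  omega
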